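/- Let G = (V,E) be a PTN and 𝒵 = {Z_1,…,Z_L} any zone partition of V. Let 𝒵' be the zone partition whose zones are the connected components of the induced subgraphs G[Z_i] for i = 1,…,L. Then: (i) L ≤ |𝒵'| ≤ |V| and every zone of 𝒵' is connected; (ii) for every path W in G, the multiple-counting zone function is unchanged, i.e., σ_M(W) computed with respect to 𝒵' equals σ_M(W) computed with respect to 𝒵. In particular, for any price function P, the objective value ∑_{d∈D} t_d |r_d − P(σ_M(W_d))| is the same for 𝒵 and 𝒵', and if N = |V| then z*_MA = z*_MC. -/

import Mathlib

open scoped Classical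
noncomputable section

/-- A zone partition of the vertex set `V`: nonempty, pairwise disjoint zones covering `V`. -/
def IsZonePartition {V : Type*} (Z : Finset (Finset V)) : Prop :=
  (∀ A ∈ Z, A.Nonempty) ∧ (∀ A ∈ Z, ∀ B ∈ Z, A ≠ B → Disjoint A B) ∧
    ∀ v : V, ∃ A ∈ Z, v ∈ A

/-- `v` and `w` lie in a common zone of `Z`. -/
def SameZone {V : Type*} (Z : Finset (Finset V)) (v w : V) : Prop :=
  ∃ A ∈ Z, v ∈ A ∧ w ∈ A

/-- Multiple-counting zone function: one plus the number of zone borders crossed along `W`. -/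
def sigmaM {V : Type*} (Z : Finset (Finset V)) (W : List V) : ℕ :=
  1 + ((W.zip W.tail).filter (fun p => decide (¬ SameZone Z p.1 p.2))).length

/-- Single-counting zone function: the number of distinct zones met by `W`. -/
def sigmaS {V : Type*} (Z : Finset (Finset V)) (W : List V) : ℕ :=
  (Z.filter (fun A => ∃ v ∈ W, v ∈ A)).card

/-- A zone is connected if the induced subgraph is connected. -/
def ZoneConnected {V : Type*} (G : SimpleGraph V) (A : Finset V) : Prop :=
  (G.induce (A : Set V)).Connected

/-- Objective value of the zone tariff design problem. -/
def zoneObj {V ι : Type*} (D : Finset ι) (r : ι → ℝ) (t : ι → ℕ) (Wd : ι → List V)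
    (σ : Finset (Finset V) → List V → ℕ) (Z : Finset (Finset V)) (P : ℕ → ℝ) : ℝ :=
  ∑ d ∈ D, (t d : ℝ) * |r d - P (σ Z (Wd d))|

/-- Optimal (infimum) objective value over all feasible zone partitions and
nonnegative price functions. -/
def zStar {V ι : Type*} (D : Finset ι) (r : ι → ℝ) (t : ι → ℕ) (Wd : ι → List V)
    (σ : Finset (Finset V) → List V → ℕ) (feas : Finset (Finset V) → Prop) : ℝ :=
  sInf {x : ℝ | ∃ Z P, feas Z ∧ (∀ k, 0 ≤ P k) ∧ x = zoneObj D r t Wd σ Z P}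

/-- The spanning subgraph of  keeping only edges whose endpoints lie in a common zone. -/
def restrictedGraph {V : Type*} (G : SimpleGraph V) (Z : Finset (Finset V)) :
    SimpleGraph V where
  Adj v w := G.Adj v w ∧ SameZone Z v w
  symm := by
    constructor
    intro v w h
    obtain ⟨A, hA, hv, hw⟩ := h.2
    exact ⟨h.1.symm, A, hA, hw, hv⟩
  loopless := ⟨fun v h => G.loopless.irrefl v h.1⟩

/-- The zone partition whose zones are the connected components of the subgraphs of `G`
induced by the zones of `Z`. -/
def refinedPartition {V : Type*} [Fintype V] (G : SimpleGraph V) (Z : Finset (Finset V)) :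
    Finset (Finset V) :=
  Finset.univ.image fun v =>
    Finset.univ.filter fun w => (restrictedGraph G Z).Reachable v w

section Aux

variable {V : Type*} [Fintype V] (G : SimpleGraph V) (Z : Finset (Finset V))

/-- The reachability component in the restricted graph. -/
def rComp (v : V) : Finset V :=
  Finset.univ.filter fun w => (restrictedGraph G Z).Reachable v w

lemma mem_rComp {v w : V} :
    w ∈ rComp G Z v ↔ (restrictedGraph G Z).Reachable v w := by
  simp [rComp]

lemma rComp_mem_refined (v : V) : rComp G Z v ∈ refinedPartition G Z :=
  Finset.mem_image_of_mem _ (Finset.mem_univ v)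

lemma mem_refined_iff {A : Finset V} :
    A ∈ refinedPartition G Z ↔ ∃ v, A = rComp G Z v := by
  simp [refinedPartition, rComp, eq_comm]

lemma zone_eq (hZ : IsZonePartition Z) {A B : Finset V} (hA : A ∈ Z) (hB : B ∈ Z)
    {u : V} (hu : u ∈ A) (hu' : u ∈ B) : A = B := by
  by_contra h
  exact Finset.disjoint_left.mp (hZ.2.1 A hA B hB h) hu hu'

lemma walk_sameZone (hZ : IsZonePartition Z) {v w : V}
    (p : (restrictedGraph G Z).Walk v w) : SameZone Z v w := by
  induction p with
  | nil =>
    rename_i u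
    obtain ⟨A, hA, hu⟩ := hZ.2.2 u
    exact ⟨A, hA, hu, hu⟩
  | cons h q ih =>
    obtain ⟨A, hA, hv, hu⟩ := h.2
    obtain ⟨B, hB, hu', hw⟩ := ih
    exact ⟨B, hB, (zone_eq Z hZ hA hB hu hu') ▸ hv, hw⟩

lemma reach_sameZone (hZ : IsZonePartition Z) {v w : V}
    (h : (restrictedGraph G Z).Reachable v w) : SameZone Z v w :=
  h.elim fun p => walk_sameZone G Z hZ p

lemma sameZone_refined_iff {v w : V} :
    SameZone (refinedPartition G Z) v w ↔ (restrictedGraph G Z).Reachable v w := by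
  constructor
  · rintro ⟨A, hA, hv, hw⟩
    obtain ⟨u, rfl⟩ := (mem_refined_iff G Z).mp hA
    exact ((mem_rComp G Z).mp hv).symm.trans ((mem_rComp G Z).mp hw)
  · intro h
    exact ⟨rComp G Z v, rComp_mem_refined G Z v,
      (mem_rComp G Z).mpr (SimpleGraph.Reachable.refl v), (mem_rComp G Z).mpr h⟩

lemma sameZone_iff_of_adj (hZ : IsZonePartition Z) {v w : V} (h : G.Adj v w) :
    SameZone (refinedPartition G Z) v w ↔ SameZone Z v w := by
  rw [sameZone_refined_iff]
  exact ⟨fun hr => reach_sameZone G Z hZ hr, fun hs => SimpleGraph.Adj.reachable ⟨h, hs⟩⟩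

lemma zip_tail_adj : ∀ {W : List V}, W.Chain' G.Adj →
    ∀ p ∈ W.zip W.tail, G.Adj p.1 p.2
  | [], _, p, hp => by simp at hp
  | [_], _, p, hp => by simp at hp
  | a :: b :: l, h, p, hp => by
    replace h : List.IsChain G.Adj (a :: b :: l) := h
    rw [List.isChain_cons_cons] at h
    rcases (List.mem_cons).mp hp with rfl | hp'
    · exact h.1
    · exact zip_tail_adj h.2 p hp'

lemma sigmaM_refined (hZ : IsZonePartition Z) {W : List V} (hW : W.Chain' G.Adj) :
    sigmaM (refinedPartition G Z) W = sigmaM Z W := by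
  unfold sigmaM
  congr 2
  apply List.filter_congr
  intro p hp
  simp only [decide_eq_decide]
  exact not_congr (sameZone_iff_of_adj G Z hZ (zip_tail_adj G hW p hp))

lemma rComp_subset_zone (hZ : IsZonePartition Z) {A : Finset V} {v : V}
    (hA : A ∈ Z) (hv : v ∈ A) : rComp G Z v ⊆ A := by
  intro u hu
  obtain ⟨B, hB, hv', hu'⟩ := reach_sameZone G Z hZ ((mem_rComp G Z).mp hu)
  exact (zone_eq Z hZ hA hB hv hv') ▸ hu'

lemma walk_induce {S : Set V}
    (hS : ∀ a b, (restrictedGraph G Z).Adj a b → a ∈ S → b ∈ S) :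
    ∀ {w x : V} (_ : (restrictedGraph G Z).Walk w x) (hw : w ∈ S) (hx : x ∈ S),
      (G.induce S).Reachable ⟨w, hw⟩ ⟨x, hx⟩ := by
  intro w x p
  induction p with
  | nil => intro hw hx; rfl
  | cons h q ih =>
    intro hw hx
    have hb := hS _ _ h hw
    exact (SimpleGraph.Adj.reachable (by exact h.1)).trans (ih hb hx)

lemma rComp_connected (v : V) : ZoneConnected G (rComp G Z v) := by
  rw [ZoneConnected, SimpleGraph.connected_iff]
  refine ⟨?_, ⟨⟨v, by simpa using (mem_rComp G Z).mpr (SimpleGraph.Reachable.refl v)⟩⟩⟩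
  rintro ⟨w, hw⟩ ⟨x, hx⟩
  have hw' : (restrictedGraph G Z).Reachable v w := (mem_rComp G Z).mp (by simpa using hw)
  have hx' : (restrictedGraph G Z).Reachable v x := (mem_rComp G Z).mp (by simpa using hx)
  have hS : ∀ a b, (restrictedGraph G Z).Adj a b →
      a ∈ ((rComp G Z v : Finset V) : Set V) → b ∈ ((rComp G Z v : Finset V) : Set V) := by
    intro a b hab ha
    have : (restrictedGraph G Z).Reachable v a := (mem_rComp G Z).mp (by simpa using ha)
    simpa using (mem_rComp G Z).mpr (this.trans hab.reachable)
  exact (hw'.symm.trans hx').elim fun p => walk_induce G Z hS p hw hx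

lemma refined_isZonePartition (hZ : IsZonePartition Z) :
    IsZonePartition (refinedPartition G Z) := by
  refine ⟨?_, ?_, ?_⟩
  · intro A hA
    obtain ⟨v, rfl⟩ := (mem_refined_iff G Z).mp hA
    exact ⟨v, (mem_rComp G Z).mpr (SimpleGraph.Reachable.refl v)⟩
  · intro A hA B hB hne
    obtain ⟨v, rfl⟩ := (mem_refined_iff G Z).mp hA
    obtain ⟨w, rfl⟩ := (mem_refined_iff G Z).mp hB
    rw [Finset.disjoint_left]
    intro u hu hu'
    apply hne
    have huv := (mem_rComp G Z).mp hu
    have huw := (mem_rComp G Z).mp hu'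
    ext x
    rw [mem_rComp, mem_rComp]
    exact ⟨fun h => (huw.trans huv.symm).trans h, fun h => (huv.trans huw.symm).trans h⟩
  · intro v
    exact ⟨rComp G Z v, rComp_mem_refined G Z v,
      (mem_rComp G Z).mpr (SimpleGraph.Reachable.refl v)⟩

lemma refined_card_le : (refinedPartition G Z).card ≤ Fintype.card V := by
  calc (refinedPartition G Z).card ≤ Finset.univ.card := Finset.card_image_le
  _ = Fintype.card V := Finset.card_univ

lemma card_le_refined [Nonempty V] (hZ : IsZonePartition Z) :
    Z.card ≤ (refinedPartition G Z).card := by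
  have hpick : ∀ A ∈ Z, (if h : A.Nonempty then h.choose else Classical.arbitrary V) ∈ A := by
    intro A hA
    have h := hZ.1 A hA
    simp only [dif_pos h]
    exact h.choose_spec
  apply Finset.card_le_card_of_injOn
    (fun A => rComp G Z (if h : A.Nonempty then h.choose else Classical.arbitrary V))
  · intro A _
    exact rComp_mem_refined G Z _
  · intro A hA B hB hAB
    set a := (if h : A.Nonempty then h.choose else Classical.arbitrary V) with ha
    have haA : a ∈ A := hpick A hA
    have : a ∈ rComp G Z a := (mem_rComp G Z).mpr (SimpleGraph.Reachable.refl a)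
    have hAB' : rComp G Z a = rComp G Z
        (if h : B.Nonempty then h.choose else Classical.arbitrary V) := hAB
    rw [hAB'] at this
    have haB : a ∈ B := rComp_subset_zone G Z hZ hB (hpick B hB) this
    exact zone_eq Z hZ hA hB haA haB

lemma refined_subset (hZ : IsZonePartition Z) :
    ∀ A ∈ refinedPartition G Z, ∃ B ∈ Z, A ⊆ B := by
  intro A hA
  obtain ⟨v, rfl⟩ := (mem_refined_iff G Z).mp hA
  obtain ⟨B, hB, hv⟩ := hZ.2.2 v
  exact ⟨B, hB, rComp_subset_zone G Z hZ hB hv⟩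

lemma refined_connected : ∀ A ∈ refinedPartition G Z, ZoneConnected G A := by
  intro A hA
  obtain ⟨v, rfl⟩ := (mem_refined_iff G Z).mp hA
  exact rComp_connected G Z v

end Aux

/-- Splitting each zone of a zone partition into the connected components of its induced
subgraph yields a zone partition with connected zones, with at least as many and at most
`|V|` zones, refining the original one, and leaving the multiple-counting zone function of
every path — hence the objective value for every price function — unchanged.  In
particular, for `N = |V|` the optimal values with arbitrary and with connected zones
coincide for multiple counting. -/
theorem refined_partition_preserves_multiple_counting {V ι : Type*} [Fintype V] [Nonempty V]
    (G : SimpleGraph V) (hG : G.Connected)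
    (Z : Finset (Finset V)) (hZ : IsZonePartition Z)
    (D : Finset ι) (r : ι → ℝ) (t : ι → ℕ) (Wd : ι → List V)
    (hr : ∀ d ∈ D, 0 ≤ r d) (ht : ∀ d ∈ D, 1 ≤ t d)
    (hW : ∀ d ∈ D, (Wd d).Chain' G.Adj ∧ Wd d ≠ [])
    (N : ℕ) (hN : 1 ≤ N) :
    (Z.card ≤ (refinedPartition G Z).card ∧
      (refinedPartition G Z).card ≤ Fintype.card V ∧
      IsZonePartition (refinedPartition G Z) ∧
      (∀ A ∈ refinedPartition G Z, ZoneConnected G A) ∧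
      ∀ A ∈ refinedPartition G Z, ∃ B ∈ Z, A ⊆ B) ∧
    (∀ W : List V, W.Chain' G.Adj → sigmaM (refinedPartition G Z) W = sigmaM Z W) ∧
    (∀ P : ℕ → ℝ,
      zoneObj D r t Wd sigmaM (refinedPartition G Z) P = zoneObj D r t Wd sigmaM Z P) ∧
    (N = Fintype.card V →
      zStar D r t Wd sigmaM (fun Z' => IsZonePartition Z' ∧ Z'.card ≤ N) =
        zStar D r t Wd sigmaM
          (fun Z' => IsZonePartition Z' ∧ Z'.card ≤ N ∧ ∀ A ∈ Z', ZoneConnected G A)) := by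
  have hobj : ∀ (Z' : Finset (Finset V)), IsZonePartition Z' → ∀ P : ℕ → ℝ,
      zoneObj D r t Wd sigmaM (refinedPartition G Z') P = zoneObj D r t Wd sigmaM Z' P := by
    intro Z' hZ' P
    unfold zoneObj
    apply Finset.sum_congr rfl
    intro d hd
    rw [sigmaM_refined G Z' hZ' (hW d hd).1]
  refine ⟨⟨card_le_refined G Z hZ, refined_card_le G Z, refined_isZonePartition G Z hZ,
      refined_connected G Z, refined_subset G Z hZ⟩,
    fun W hWc => sigmaM_refined G Z hZ hWc, hobj Z hZ, ?_⟩
  intro hNV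
  unfold zStar
  congr 1
  ext x
  simp only [Set.mem_setOf_eq]
  constructor
  · rintro ⟨Z', P, ⟨hp, hc⟩, hP, rfl⟩
    exact ⟨refinedPartition G Z', P,
      ⟨refined_isZonePartition G Z' hp, hNV ▸ refined_card_le G Z', refined_connected G Z'⟩,
      hP, (hobj Z' hp P).symm⟩
  · rintro ⟨Z', P, ⟨hp, hc, _⟩, hP, rfl⟩
    exact ⟨Z', P, ⟨hp, hc⟩, hP, rfl⟩

end
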